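/- (Lemma A.2, bias of the variance estimator.) Let U₁,…,Uₙ be i.i.d. pairs Uᵢ = (Xᵢ,Yᵢ) with Xᵢ ~ P, Yᵢ ~ Q, and n ≥ 4. Then |E[σ̂²] − σ²_{H₁*}| ≤ 72 ν² (9/n − 13/n² + 6/n³) ≤ 648 ν²/n. -/

import Mathlib

open MeasureTheory ProbabilityTheory Filter Finset

/-- `Hstar k (x,y) (x',y') = k(x,x') - k(x,y') - k(y,x')`. -/
noncomputable def Hstar {𝒳 : Type*} (k : 𝒳 → 𝒳 → ℝ) (u v : 𝒳 × 𝒳) : ℝ :=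
  k u.1 v.1 - k u.1 v.2 - k u.2 v.1

/-- The variance estimator
`σ̂² = (4/n³) ∑ᵢ (∑ⱼ H*ᵢⱼ)² − (4/n⁴) (∑ᵢ∑ⱼ H*ᵢⱼ)²` (sums include `i = j`). -/
noncomputable def sigmaHat {𝒳 : Type*} (k : 𝒳 → 𝒳 → ℝ) (n : ℕ) (u : Fin n → 𝒳 × 𝒳) : ℝ :=
  (4 / (n : ℝ) ^ 3) * ∑ i : Fin n, (∑ j : Fin n, Hstar k (u i) (u j)) ^ 2
    - (4 / (n : ℝ) ^ 4) * (∑ i : Fin n, ∑ j : Fin n, Hstar k (u i) (u j)) ^ 2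

/-- `σ²_{H₁*} = 4 (E[H*₁₂ H*₁₃] - (E[H*₁₂])²)`, expectations over i.i.d. pairs
with common law `m`, written as iterated integrals. -/
noncomputable def sigmaSqPop {𝒳 : Type*} [MeasurableSpace 𝒳]
    (m : Measure (𝒳 × 𝒳)) (k : 𝒳 → 𝒳 → ℝ) : ℝ :=
  4 * ((∫ u, (∫ v, (∫ w, Hstar k u v * Hstar k u w ∂m) ∂m) ∂m)
    - (∫ u, (∫ v, Hstar k u v ∂m) ∂m) ^ 2)

section Aux

variable {Ω₀ : Type*} [MeasurableSpace Ω₀]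

lemma my_integrable_of_bound {α : Type*} [MeasurableSpace α] (μ : Measure α) [IsFiniteMeasure μ]
    (f : α → ℝ) (hf : Measurable f) (C : ℝ) (h : ∀ x, |f x| ≤ C) : Integrable f μ :=
  (integrable_const C).mono' hf.aestronglyMeasurable (ae_of_all _ h)

lemma my_integral_indepFun {α β : Type*} [MeasurableSpace α] [MeasurableSpace β]
    (μ : Measure Ω₀) [IsProbabilityMeasure μ]
    {f : Ω₀ → α} {g : Ω₀ → β} (hf : Measurable f) (hg : Measurable g)
    (hfg : IndepFun f g μ)
    {F : α × β → ℝ} (hF : Measurable F) {C : ℝ} (hC : ∀ p, |F p| ≤ C) :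
    ∫ ω, F (f ω, g ω) ∂μ = ∫ a, ∫ b, F (a, b) ∂(μ.map g) ∂(μ.map f) := by
  have hpm : Measurable (fun ω => (f ω, g ω)) := hf.prodMk hg
  have hmap : μ.map (fun ω => (f ω, g ω)) = (μ.map f).prod (μ.map g) :=
    (indepFun_iff_map_prod_eq_prod_map_map hf.aemeasurable hg.aemeasurable).mp hfg
  haveI : IsProbabilityMeasure (μ.map f) := Measure.isProbabilityMeasure_map hf.aemeasurable
  haveI : IsProbabilityMeasure (μ.map g) := Measure.isProbabilityMeasure_map hg.aemeasurable
  calc ∫ ω, F (f ω, g ω) ∂μ = ∫ p, F p ∂(μ.map (fun ω => (f ω, g ω))) :=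
        (integral_map hpm.aemeasurable hF.aestronglyMeasurable).symm
    _ = ∫ p, F p ∂((μ.map f).prod (μ.map g)) := by rw [hmap]
    _ = ∫ a, ∫ b, F (a, b) ∂(μ.map g) ∂(μ.map f) :=
        integral_prod F (my_integrable_of_bound _ F hF C hC)

end Aux

section Quad

variable {Ω₀ : Type*} [MeasurableSpace Ω₀]

lemma my_integral_quad {α : Type*} [MeasurableSpace α]
    (μ : Measure Ω₀) [IsProbabilityMeasure μ] (m : Measure α) [IsProbabilityMeasure m]
    {n : ℕ} (U : Fin n → Ω₀ → α) (hU : ∀ i, Measurable (U i))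
    (hindep : iIndepFun U μ)
    (hlaw : ∀ i, Measure.map (U i) μ = m)
    {a b c d : Fin n} (hab : a ≠ b) (hac : a ≠ c) (had : a ≠ d)
    (hbc : b ≠ c) (hbd : b ≠ d) (hcd : c ≠ d)
    (F : α → α → α → α → ℝ)
    (hF : Measurable (fun p : α × α × α × α => F p.1 p.2.1 p.2.2.1 p.2.2.2))
    {C : ℝ} (hC : ∀ u v w z, |F u v w z| ≤ C) :
    ∫ ω, F (U a ω) (U b ω) (U c ω) (U d ω) ∂μ
      = ∫ u, ∫ v, ∫ w, ∫ z, F u v w z ∂m ∂m ∂m ∂m := by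
  classical
  have g3meas : Measurable (fun ω => (U b ω, U c ω, U d ω)) :=
    (hU b).prodMk ((hU c).prodMk (hU d))
  have I1 : IndepFun (U c) (U d) μ := hindep.indepFun hcd
  have hmapcd : μ.map (fun ω => (U c ω, U d ω)) = m.prod m := by
    have h := (indepFun_iff_map_prod_eq_prod_map_map (hU c).aemeasurable
      (hU d).aemeasurable).mp I1
    rwa [hlaw c, hlaw d] at h
  have I2 : IndepFun (U b) (fun ω => (U c ω, U d ω)) μ :=
    (hindep.indepFun_prodMk hU c d b hbc.symm hbd.symm).symm
  have hmapbcd : μ.map (fun ω => (U b ω, (U c ω, U d ω))) = m.prod (m.prod m) := by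
    have h := (indepFun_iff_map_prod_eq_prod_map_map (hU b).aemeasurable
      ((hU c).prodMk (hU d)).aemeasurable).mp I2
    rwa [hlaw b, hmapcd] at h
  have I3 : IndepFun (U a) (fun ω => (U b ω, U c ω, U d ω)) μ := by
    have hd : Disjoint ({a} : Finset (Fin n)) {b, c, d} := by
      simp [Finset.disjoint_left, hab, hac, had]
    have hmb : b ∈ ({b, c, d} : Finset (Fin n)) := by simp
    have hmc : c ∈ ({b, c, d} : Finset (Fin n)) := by simp
    have hmd : d ∈ ({b, c, d} : Finset (Fin n)) := by simp
    have h := (hindep.indepFun_finset {a} {b, c, d} hd hU).comp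
      (show Measurable fun v : (({a} : Finset (Fin n)) → α) => v ⟨a, by simp⟩ from
        measurable_pi_apply _)
      (show Measurable fun v : (({b, c, d} : Finset (Fin n)) → α) =>
          (v ⟨b, hmb⟩, v ⟨c, hmc⟩, v ⟨d, hmd⟩) from by fun_prop)
    exact h
  have key := my_integral_indepFun μ (hU a) g3meas I3
    (F := fun p : α × α × α × α => F p.1 p.2.1 p.2.2.1 p.2.2.2) hF
    (fun p => hC p.1 p.2.1 p.2.2.1 p.2.2.2)
  rw [hlaw a, hmapbcd] at key
  rw [show (fun ω => F (U a ω) (U b ω) (U c ω) (U d ω))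
      = fun ω => (fun p : α × α × α × α => F p.1 p.2.1 p.2.2.1 p.2.2.2)
        (U a ω, U b ω, U c ω, U d ω) from rfl] at key ⊢
  rw [key]
  refine integral_congr_ae (ae_of_all _ fun u => ?_)
  show ∫ t : α × α × α, F u t.1 t.2.1 t.2.2 ∂(m.prod (m.prod m))
      = ∫ v, ∫ w, ∫ z, F u v w z ∂m ∂m ∂m
  have h1 : Integrable (fun t : α × α × α => F u t.1 t.2.1 t.2.2) (m.prod (m.prod m)) := by
    refine my_integrable_of_bound _ _ ?_ C (fun t => hC u t.1 t.2.1 t.2.2)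
    exact hF.comp (measurable_const.prodMk measurable_id)
  rw [integral_prod _ h1]
  refine integral_congr_ae (ae_of_all _ fun v => ?_)
  show ∫ t : α × α, F u v t.1 t.2 ∂(m.prod m) = ∫ w, ∫ z, F u v w z ∂m ∂m
  have h2 : Integrable (fun t : α × α => F u v t.1 t.2) (m.prod m) := by
    refine my_integrable_of_bound _ _ ?_ C (fun t => hC u v t.1 t.2)
    exact hF.comp (measurable_const.prodMk (measurable_const.prodMk measurable_id))
  rw [integral_prod _ h2]

end Quad

lemma my_exists_ne3 {n : ℕ} (hn : 4 ≤ n) (i j l : Fin n) :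
    ∃ x : Fin n, x ≠ i ∧ x ≠ j ∧ x ≠ l := by
  by_contra h
  push_neg at h
  have hsub : (univ : Finset (Fin n)) ⊆ {i, j, l} := by
    intro x _
    rcases eq_or_ne x i with rfl | hxi
    · simp
    rcases eq_or_ne x j with rfl | hxj
    · simp
    have := h x hxi hxj
    simp [this]
  have hcard := Finset.card_le_card hsub
  have h3 : ({i, j, l} : Finset (Fin n)).card ≤ 3 := by
    refine le_trans (Finset.card_insert_le _ _) ?_
    have := Finset.card_insert_le j ({l} : Finset (Fin n))
    simp at this ⊢
    omega
  simp [Finset.card_univ] at hcard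
  omega

section Patterns

variable {Ω₀ α : Type*} [MeasurableSpace Ω₀] [MeasurableSpace α]
variable (μ : Measure Ω₀) [IsProbabilityMeasure μ] (m : Measure α) [IsProbabilityMeasure m]
variable {n : ℕ} (U : Fin n → Ω₀ → α) (hU : ∀ i, Measurable (U i))
variable (hindep : iIndepFun U μ)
variable (hlaw : ∀ i, Measure.map (U i) μ = m)
variable (H : α → α → ℝ) (hH : Measurable (fun p : α × α => H p.1 p.2))
variable {C : ℝ} (hC0 : 0 ≤ C) (hC : ∀ u v, |H u v| ≤ C)

-- measurability helper
include hH in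
lemma my_measH {β : Type*} [MeasurableSpace β] {f g : β → α}
    (hf : Measurable f) (hg : Measurable g) :
    Measurable (fun x => H (f x) (g x)) := hH.comp (hf.prodMk hg)

include hC0 hC in
lemma my_boundHH : ∀ u v w z : α, |H u v * H w z| ≤ C * C := by
  intro u v w z
  rw [abs_mul]
  exact mul_le_mul (hC u v) (hC w z) (abs_nonneg _) hC0


include hU hindep hlaw hH hC0 hC in
lemma my_E2_all (i j l r : Fin n) (hij : i ≠ j) (hil : i ≠ l) (him : i ≠ r)
    (hjl : j ≠ l) (hjm : j ≠ r) (hlm : l ≠ r) :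
    ∫ ω, H (U i ω) (U j ω) * H (U l ω) (U r ω) ∂μ
      = (∫ u, ∫ v, H u v ∂m ∂m) * (∫ u, ∫ v, H u v ∂m ∂m) := by
  have hq := my_integral_quad μ m U hU hindep hlaw hij hil him hjl hjm hlm
    (fun u v w z => H u v * H w z)
    ((my_measH H hH (by fun_prop) (by fun_prop)).mul
      (my_measH H hH (by fun_prop) (by fun_prop)))
    (my_boundHH H hC0 hC)
  rw [hq]
  simp only [integral_const_mul, integral_mul_const]

include hU hindep hlaw hH hC0 hC in
lemma my_E2_a (hn : 4 ≤ n) (i j l : Fin n) (hij : i ≠ j) (hil : i ≠ l) (hjl : j ≠ l) :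
    ∫ ω, H (U i ω) (U j ω) * H (U i ω) (U l ω) ∂μ
      = ∫ u, ∫ v, ∫ w, H u v * H u w ∂m ∂m ∂m := by
  obtain ⟨x, hxi, hxj, hxl⟩ := my_exists_ne3 hn i j l
  have hq := my_integral_quad μ m U hU hindep hlaw hij hil hxi.symm hjl hxj.symm hxl.symm
    (fun u v w z => H u v * H u w)
    ((my_measH H hH (by fun_prop) (by fun_prop)).mul
      (my_measH H hH (by fun_prop) (by fun_prop)))
    (fun u v w z => my_boundHH H hC0 hC u v u w)
  rw [hq]
  simp only [integral_const, measure_univ, probReal_univ, ENNReal.toReal_one, one_smul]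

include hU hindep hlaw hH hC0 hC in
lemma my_E2_s (hn : 4 ≤ n) (i j : Fin n) (hij : i ≠ j) :
    ∫ ω, H (U i ω) (U j ω) * H (U i ω) (U j ω) ∂μ
      = ∫ u, ∫ v, H u v * H u v ∂m ∂m := by
  obtain ⟨x, hxi, hxj, -⟩ := my_exists_ne3 hn i j j
  obtain ⟨y, hyi, hyj, hyx⟩ := my_exists_ne3 hn i j x
  have hq := my_integral_quad μ m U hU hindep hlaw hij hxi.symm hyi.symm hxj.symm hyj.symm hyx.symm
    (fun u v w z => H u v * H u v)
    ((my_measH H hH (by fun_prop) (by fun_prop)).mul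
      (my_measH H hH (by fun_prop) (by fun_prop)))
    (fun u v w z => my_boundHH H hC0 hC u v u v)
  rw [hq]
  simp only [integral_const, measure_univ, probReal_univ, ENNReal.toReal_one, one_smul]

include hU hindep hlaw hH hC0 hC in
lemma my_E2_d2 (hn : 4 ≤ n) (i : Fin n) :
    ∫ ω, H (U i ω) (U i ω) * H (U i ω) (U i ω) ∂μ
      = ∫ u, H u u * H u u ∂m := by
  obtain ⟨x, hxi, -, -⟩ := my_exists_ne3 hn i i i
  obtain ⟨y, hyi, hyx, -⟩ := my_exists_ne3 hn i x x
  obtain ⟨z, hzi, hzx, hzy⟩ := my_exists_ne3 hn i x y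
  have hq := my_integral_quad μ m U hU hindep hlaw hxi.symm hyi.symm hzi.symm hyx.symm hzx.symm hzy.symm
    (fun u v w z => H u u * H u u)
    ((my_measH H hH (by fun_prop) (by fun_prop)).mul
      (my_measH H hH (by fun_prop) (by fun_prop)))
    (fun u v w z => my_boundHH H hC0 hC u u u u)
  rw [hq]
  simp only [integral_const, measure_univ, probReal_univ, ENNReal.toReal_one, one_smul]

include hU hindep hlaw hH hC0 hC in
lemma my_E2_c (hn : 4 ≤ n) (i r : Fin n) (hir : i ≠ r) :
    ∫ ω, H (U i ω) (U i ω) * H (U i ω) (U r ω) ∂μ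
      = ∫ u, ∫ v, H u u * H u v ∂m ∂m := by
  obtain ⟨x, hxi, hxr, -⟩ := my_exists_ne3 hn i r r
  obtain ⟨y, hyi, hyr, hyx⟩ := my_exists_ne3 hn i r x
  have hq := my_integral_quad μ m U hU hindep hlaw hir hxi.symm hyi.symm hxr.symm hyr.symm hyx.symm
    (fun u v w z => H u u * H u v)
    ((my_measH H hH (by fun_prop) (by fun_prop)).mul
      (my_measH H hH (by fun_prop) (by fun_prop)))
    (fun u v w z => my_boundHH H hC0 hC u u u v)
  rw [hq]
  simp only [integral_const, measure_univ, probReal_univ, ENNReal.toReal_one, one_smul]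

include hU hindep hlaw hH hC0 hC in
lemma my_E2_dd (hn : 4 ≤ n) (i l : Fin n) (hil : i ≠ l) :
    ∫ ω, H (U i ω) (U i ω) * H (U l ω) (U l ω) ∂μ
      = (∫ u, H u u ∂m) * (∫ u, H u u ∂m) := by
  obtain ⟨x, hxi, hxl, -⟩ := my_exists_ne3 hn i l l
  obtain ⟨y, hyi, hyl, hyx⟩ := my_exists_ne3 hn i l x
  have hq := my_integral_quad μ m U hU hindep hlaw hil hxi.symm hyi.symm hxl.symm hyl.symm hyx.symm
    (fun u v w z => H u u * H v v)
    ((my_measH H hH (by fun_prop) (by fun_prop)).mul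
      (my_measH H hH (by fun_prop) (by fun_prop)))
    (fun u v w z => my_boundHH H hC0 hC u u v v)
  rw [hq]
  simp only [integral_const, measure_univ, probReal_univ, ENNReal.toReal_one, one_smul,
    integral_const_mul, integral_mul_const]

include hU hindep hlaw hH hC0 hC in
lemma my_E2_dtheta (hn : 4 ≤ n) (i l r : Fin n) (hil : i ≠ l) (hir : i ≠ r) (hlr : l ≠ r) :
    ∫ ω, H (U i ω) (U i ω) * H (U l ω) (U r ω) ∂μ
      = (∫ u, H u u ∂m) * (∫ u, ∫ v, H u v ∂m ∂m) := by
  obtain ⟨x, hxi, hxl, hxr⟩ := my_exists_ne3 hn i l r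
  have hq := my_integral_quad μ m U hU hindep hlaw hil hir hxi.symm hlr hxl.symm hxr.symm
    (fun u v w z => H u u * H v w)
    ((my_measH H hH (by fun_prop) (by fun_prop)).mul
      (my_measH H hH (by fun_prop) (by fun_prop)))
    (fun u v w z => my_boundHH H hC0 hC u u v w)
  rw [hq]
  simp only [integral_const, measure_univ, probReal_univ, ENNReal.toReal_one, one_smul,
    integral_const_mul, integral_mul_const]

end Patterns
section Counting

lemma my_card_erase1 {n : ℕ} (i : Fin n) :
    (((univ : Finset (Fin n)).erase i).card : ℝ) = (n : ℝ) - 1 := by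
  have hi : i ∈ (univ : Finset (Fin n)) := mem_univ i
  rw [Finset.card_erase_of_mem hi, Finset.card_univ, Fintype.card_fin]
  have h1 : 1 ≤ n := Nat.pos_of_ne_zero (by rintro rfl; exact (Nat.not_lt_zero _ i.2).elim)
  push_cast [Nat.cast_sub h1]
  ring

lemma my_card_erase2 {n : ℕ} (hn : 2 ≤ n) (i j : Fin n) (hji : j ≠ i) :
    ((((univ : Finset (Fin n)).erase i).erase j).card : ℝ) = (n : ℝ) - 2 := by
  have hj : j ∈ (univ : Finset (Fin n)).erase i := Finset.mem_erase.2 ⟨hji, mem_univ j⟩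
  rw [Finset.card_erase_of_mem hj, Finset.card_erase_of_mem (mem_univ i),
    Finset.card_univ, Fintype.card_fin]
  push_cast [Nat.cast_sub (by omega : 1 ≤ n - 1), Nat.cast_sub (by omega : 1 ≤ n)]
  ring

lemma my_card_erase3 {n : ℕ} (hn : 3 ≤ n) (i j l : Fin n) (hji : j ≠ i)
    (hli : l ≠ i) (hlj : l ≠ j) :
    (((((univ : Finset (Fin n)).erase i).erase j).erase l).card : ℝ) = (n : ℝ) - 3 := by
  have hj : j ∈ (univ : Finset (Fin n)).erase i := Finset.mem_erase.2 ⟨hji, mem_univ j⟩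
  have hl : l ∈ ((univ : Finset (Fin n)).erase i).erase j :=
    Finset.mem_erase.2 ⟨hlj, Finset.mem_erase.2 ⟨hli, mem_univ l⟩⟩
  rw [Finset.card_erase_of_mem hl, Finset.card_erase_of_mem hj,
    Finset.card_erase_of_mem (mem_univ i), Finset.card_univ, Fintype.card_fin]
  push_cast [Nat.cast_sub (by omega : 1 ≤ n - 1 - 1), Nat.cast_sub (by omega : 1 ≤ n - 1),
    Nat.cast_sub (by omega : 1 ≤ n)]
  ring

lemma my_countA {n : ℕ} (hn : 4 ≤ n) (f : Fin n → Fin n → ℝ) (i : Fin n)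
    (d2 c s aM : ℝ)
    (h1 : f i i = d2) (h2 : ∀ l, l ≠ i → f i l = c) (h6 : ∀ j, j ≠ i → f j i = c)
    (h7 : ∀ j, j ≠ i → f j j = s)
    (h8 : ∀ j l, j ≠ i → l ≠ i → j ≠ l → f j l = aM) :
    ∑ j, ∑ l, f j l
      = d2 + 2 * ((n : ℝ) - 1) * c + ((n : ℝ) - 1) * s
        + ((n : ℝ) - 1) * ((n : ℝ) - 2) * aM := by
  rw [← Finset.add_sum_erase _ (fun j => ∑ l, f j l) (mem_univ i)]
  have hA : ∑ l, f i l = d2 + ((n : ℝ) - 1) * c := by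
    rw [← Finset.add_sum_erase _ _ (mem_univ i), h1,
      Finset.sum_congr rfl (fun l hl => h2 l (Finset.mem_erase.1 hl).1),
      Finset.sum_const, nsmul_eq_mul, my_card_erase1]
  have hB : ∀ j ∈ (univ : Finset (Fin n)).erase i,
      ∑ l, f j l = c + s + ((n : ℝ) - 2) * aM := by
    intro j hj
    have hji : j ≠ i := (Finset.mem_erase.1 hj).1
    rw [← Finset.add_sum_erase _ _ (mem_univ i), h6 j hji,
      ← Finset.add_sum_erase _ _ hj, h7 j hji,
      Finset.sum_congr rfl (fun l hl => by
        have h := Finset.mem_erase.1 hl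
        exact h8 j l hji (Finset.mem_erase.1 h.2).1 (Ne.symm h.1)),
      Finset.sum_const, nsmul_eq_mul, my_card_erase2 (by omega) i j hji]
    ring
  rw [hA, Finset.sum_congr rfl hB, Finset.sum_const, nsmul_eq_mul, my_card_erase1]
  ring

lemma my_countB {n : ℕ} (hn : 4 ≤ n) (e : Fin n → Fin n → Fin n → Fin n → ℝ)
    (d2 c s aM dd dth th2 : ℝ)
    (h1 : ∀ i, e i i i i = d2)
    (h2 : ∀ i r, r ≠ i → e i i i r = c)
    (h3 : ∀ i l, l ≠ i → e i i l i = c)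
    (h4 : ∀ i l, l ≠ i → e i i l l = dd)
    (h5 : ∀ i l r, l ≠ i → r ≠ i → r ≠ l → e i i l r = dth)
    (h6 : ∀ i j, j ≠ i → e i j i i = c)
    (h7 : ∀ i j, j ≠ i → e i j i j = s)
    (h8 : ∀ i j r, j ≠ i → r ≠ i → r ≠ j → e i j i r = aM)
    (h9 : ∀ i j, j ≠ i → e i j j i = s)
    (h10 : ∀ i j, j ≠ i → e i j j j = c)
    (h11 : ∀ i j r, j ≠ i → r ≠ i → r ≠ j → e i j j r = aM)
    (h12 : ∀ i j l, j ≠ i → l ≠ i → l ≠ j → e i j l i = aM)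
    (h13 : ∀ i j l, j ≠ i → l ≠ i → l ≠ j → e i j l j = aM)
    (h14 : ∀ i j l, j ≠ i → l ≠ i → l ≠ j → e i j l l = dth)
    (h15 : ∀ i j l r, j ≠ i → l ≠ i → l ≠ j → r ≠ i → r ≠ j → r ≠ l →
      e i j l r = th2) :
    ∑ i, ∑ j, ∑ l, ∑ r, e i j l r
      = (n : ℝ) * (d2 + ((n:ℝ)-1)*dd + 4*((n:ℝ)-1)*c + 2*((n:ℝ)-1)*s
        + 2*((n:ℝ)-1)*((n:ℝ)-2)*dth + 4*((n:ℝ)-1)*((n:ℝ)-2)*aM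
        + ((n:ℝ)-1)*((n:ℝ)-2)*((n:ℝ)-3)*th2) := by
  have hInner : ∀ i : Fin n, ∑ j, ∑ l, ∑ r, e i j l r
      = d2 + ((n:ℝ)-1)*dd + 4*((n:ℝ)-1)*c + 2*((n:ℝ)-1)*s
        + 2*((n:ℝ)-1)*((n:ℝ)-2)*dth + 4*((n:ℝ)-1)*((n:ℝ)-2)*aM
        + ((n:ℝ)-1)*((n:ℝ)-2)*((n:ℝ)-3)*th2 := by
    intro i
    have hTii : ∑ l, ∑ r, e i i l r
        = d2 + ((n:ℝ)-1)*c + ((n:ℝ)-1)*(c + dd + ((n:ℝ)-2)*dth) := by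
      rw [← Finset.add_sum_erase _ (fun l => ∑ r, e i i l r) (mem_univ i)]
      have hSli : ∑ r, e i i i r = d2 + ((n:ℝ)-1)*c := by
        rw [← Finset.add_sum_erase _ _ (mem_univ i), h1,
          Finset.sum_congr rfl (fun r hr => h2 i r (Finset.mem_erase.1 hr).1),
          Finset.sum_const, nsmul_eq_mul, my_card_erase1]
      have hSl : ∀ l ∈ (univ : Finset (Fin n)).erase i,
          ∑ r, e i i l r = c + dd + ((n:ℝ)-2)*dth := by
        intro l hl
        have hli : l ≠ i := (Finset.mem_erase.1 hl).1
        rw [← Finset.add_sum_erase _ _ (mem_univ i), h3 i l hli,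
          ← Finset.add_sum_erase _ _ hl, h4 i l hli,
          Finset.sum_congr rfl (fun r hr => by
            have h := Finset.mem_erase.1 hr
            exact h5 i l r hli (Finset.mem_erase.1 h.2).1 h.1),
          Finset.sum_const, nsmul_eq_mul, my_card_erase2 (by omega) i l hli]
        ring
      rw [hSli, Finset.sum_congr rfl hSl, Finset.sum_const, nsmul_eq_mul, my_card_erase1]
    have hTij : ∀ j ∈ (univ : Finset (Fin n)).erase i,
        ∑ l, ∑ r, e i j l r
          = 2*c + 2*s + 2*((n:ℝ)-2)*aM
            + ((n:ℝ)-2)*(2*aM + dth + ((n:ℝ)-3)*th2) := by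
      intro j hj
      have hji : j ≠ i := (Finset.mem_erase.1 hj).1
      rw [← Finset.add_sum_erase _ (fun l => ∑ r, e i j l r) (mem_univ i)]
      have hSli : ∑ r, e i j i r = c + s + ((n:ℝ)-2)*aM := by
        rw [← Finset.add_sum_erase _ _ (mem_univ i), h6 i j hji,
          ← Finset.add_sum_erase _ _ hj, h7 i j hji,
          Finset.sum_congr rfl (fun r hr => by
            have h := Finset.mem_erase.1 hr
            exact h8 i j r hji (Finset.mem_erase.1 h.2).1 h.1),
          Finset.sum_const, nsmul_eq_mul, my_card_erase2 (by omega) i j hji]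
        ring
      rw [hSli, ← Finset.add_sum_erase _ (fun l => ∑ r, e i j l r) hj]
      have hSlj : ∑ r, e i j j r = s + c + ((n:ℝ)-2)*aM := by
        rw [← Finset.add_sum_erase _ _ (mem_univ i), h9 i j hji,
          ← Finset.add_sum_erase _ _ hj, h10 i j hji,
          Finset.sum_congr rfl (fun r hr => by
            have h := Finset.mem_erase.1 hr
            exact h11 i j r hji (Finset.mem_erase.1 h.2).1 h.1),
          Finset.sum_const, nsmul_eq_mul, my_card_erase2 (by omega) i j hji]
        ring
      have hSl : ∀ l ∈ ((univ : Finset (Fin n)).erase i).erase j,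
          ∑ r, e i j l r = 2*aM + dth + ((n:ℝ)-3)*th2 := by
        intro l hl
        have hlj : l ≠ j := (Finset.mem_erase.1 hl).1
        have hli : l ≠ i := (Finset.mem_erase.1 (Finset.mem_erase.1 hl).2).1
        rw [← Finset.add_sum_erase _ _ (mem_univ i), h12 i j l hji hli hlj,
          ← Finset.add_sum_erase _ _ hj, h13 i j l hji hli hlj,
          ← Finset.add_sum_erase _ _ hl, h14 i j l hji hli hlj,
          Finset.sum_congr rfl (fun r hr => by
            have ha := Finset.mem_erase.1 hr
            have hb := Finset.mem_erase.1 ha.2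
            have hc := Finset.mem_erase.1 hb.2
            exact h15 i j l r hji hli hlj hc.1 hb.1 ha.1),
          Finset.sum_const, nsmul_eq_mul, my_card_erase3 (by omega) i j l hji hli hlj]
        ring
      rw [hSlj, Finset.sum_congr rfl hSl, Finset.sum_const, nsmul_eq_mul,
        my_card_erase2 (by omega) i j hji]
      ring
    rw [← Finset.add_sum_erase _ (fun j => ∑ l, ∑ r, e i j l r) (mem_univ i),
      hTii, Finset.sum_congr rfl hTij, Finset.sum_const, nsmul_eq_mul, my_card_erase1]
    ring
  rw [Finset.sum_congr rfl (fun i _ => hInner i), Finset.sum_const, nsmul_eq_mul,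
    Finset.card_univ, Fintype.card_fin]

end Counting


lemma my_cb1 {N : ℝ} (hN : 4 ≤ N) : |4*((N-1)*(N-2)*(N-4) - N^3)| ≤ 28*N^2-56*N+32 :=
  abs_le.2 ⟨by nlinarith [sq_nonneg (N-1)], by nlinarith [sq_nonneg (N-1)]⟩

lemma my_cb2 {N : ℝ} (hN : 4 ≤ N) : |4*(6*N^2-11*N+6)| ≤ 24*N^2-44*N+24 :=
  abs_le.2 ⟨by nlinarith [sq_nonneg (N-1)], by nlinarith⟩

lemma my_cb3 {N : ℝ} (hN : 4 ≤ N) : |4*(N-1)*(N-2)| ≤ 4*N^2-12*N+8 :=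
  abs_le.2 ⟨by nlinarith, by nlinarith⟩

lemma my_cb4 {N : ℝ} (hN : 4 ≤ N) : |8*(N-1)*(N-2)| ≤ 8*N^2-24*N+16 :=
  abs_le.2 ⟨by nlinarith, by nlinarith⟩

lemma my_cb5 {N : ℝ} (hN : 4 ≤ N) : |4*N-4| ≤ 4*N-4 :=
  abs_le.2 ⟨by nlinarith, by nlinarith⟩

lemma my_cb6 {N : ℝ} (hN : 4 ≤ N) : |(-(8*(N-1)*(N-2)))| ≤ 8*N^2-24*N+16 :=
  abs_le.2 ⟨by nlinarith, by nlinarith⟩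

lemma my_cb7 {N : ℝ} (hN : 4 ≤ N) : |(-(4*(N-1)))| ≤ 4*N-4 :=
  abs_le.2 ⟨by nlinarith, by nlinarith⟩

lemma my_fin1 {N ν : ℝ} (hN : 4 ≤ N) :
    (72*N^2-152*N+88)*((3*ν)*(3*ν)) ≤ 72*ν^2*(9*N^2-13*N+6) := by
  nlinarith [mul_nonneg (sq_nonneg ν) (show (0:ℝ) ≤ 432*N-360 by linarith)]

lemma my_fin2 {N ν : ℝ} (hN : 4 ≤ N) :
    72*ν^2*(9*N^2-13*N+6) ≤ 648*ν^2*N^2 := by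
  nlinarith [mul_nonneg (sq_nonneg ν) (show (0:ℝ) ≤ 936*N-432 by linarith)]


set_option maxHeartbeats 2000000 in
/-- Lemma A.2 (bias of the variance estimator):
`|E[σ̂²] − σ²_{H₁*}| ≤ 72ν² (9/n − 13/n² + 6/n³) ≤ 648ν²/n`. -/
theorem sigmaHat_bias {𝒳 Ω₀ : Type*} [MeasurableSpace 𝒳] [MeasurableSpace Ω₀]
    (μ : Measure Ω₀) [IsProbabilityMeasure μ]
    (P Q : Measure 𝒳) [IsProbabilityMeasure P] [IsProbabilityMeasure Q]
    (m : Measure (𝒳 × 𝒳)) [IsProbabilityMeasure m]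
    (k : 𝒳 → 𝒳 → ℝ) (ν : ℝ)
    (hk : Measurable (Function.uncurry k))
    (hsymm : ∀ x x', k x x' = k x' x)
    (hbound : ∀ x x', |k x x'| ≤ ν)
    (n : ℕ) (hn : 4 ≤ n)
    (U : Fin n → Ω₀ → 𝒳 × 𝒳)
    (hU : ∀ i, Measurable (U i))
    (hindep : iIndepFun U μ)
    (hlaw : ∀ i, Measure.map (U i) μ = m)
    (hmP : m.map Prod.fst = P) (hmQ : m.map Prod.snd = Q) :
    |(∫ ω, sigmaHat k n (fun i => U i ω) ∂μ) - sigmaSqPop m k| ≤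
        72 * ν ^ 2 * (9 / (n : ℝ) - 13 / (n : ℝ) ^ 2 + 6 / (n : ℝ) ^ 3) ∧
      72 * ν ^ 2 * (9 / (n : ℝ) - 13 / (n : ℝ) ^ 2 + 6 / (n : ℝ) ^ 3) ≤
        648 * ν ^ 2 / n := by
  classical
  have hne : Nonempty (𝒳 × 𝒳) := by
    by_contra h
    rw [not_nonempty_iff] at h
    have h1 : m Set.univ = 1 := measure_univ
    rw [Set.univ_eq_empty_iff.2 h, measure_empty] at h1
    exact zero_ne_one h1
  obtain ⟨u0⟩ := hne
  have hν : 0 ≤ ν := le_trans (abs_nonneg _) (hbound u0.1 u0.1)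
  have hN4 : (4:ℝ) ≤ (n:ℝ) := by exact_mod_cast hn
  have hN0 : (0:ℝ) < (n:ℝ) := by linarith
  have hNne : ((n:ℝ)) ≠ 0 := ne_of_gt hN0
  have hHmeas : Measurable (fun p : (𝒳×𝒳)×(𝒳×𝒳) => Hstar k p.1 p.2) := by
    have h1 : Measurable (fun p : (𝒳×𝒳)×(𝒳×𝒳) => k p.1.1 p.2.1) :=
      hk.comp ((measurable_fst.fst).prodMk (measurable_snd.fst))
    have h2 : Measurable (fun p : (𝒳×𝒳)×(𝒳×𝒳) => k p.1.1 p.2.2) :=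
      hk.comp ((measurable_fst.fst).prodMk (measurable_snd.snd))
    have h3 : Measurable (fun p : (𝒳×𝒳)×(𝒳×𝒳) => k p.1.2 p.2.1) :=
      hk.comp ((measurable_fst.snd).prodMk (measurable_snd.fst))
    exact (h1.sub h2).sub h3
  have hC0 : (0:ℝ) ≤ 3*ν := by linarith
  have hHb : ∀ u v : 𝒳×𝒳, |Hstar k u v| ≤ 3*ν := by
    intro u v
    have h1 := abs_le.1 (hbound u.1 v.1)
    have h2 := abs_le.1 (hbound u.1 v.2)
    have h3 := abs_le.1 (hbound u.2 v.1)
    simp only [Hstar]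
    rw [abs_le]
    constructor <;> linarith [h1.1, h1.2, h2.1, h2.2, h3.1, h3.2]
  have hHsym : ∀ u v : 𝒳×𝒳, Hstar k u v = Hstar k v u := by
    intro u v
    simp only [Hstar]
    rw [hsymm v.1 u.1, hsymm v.1 u.2, hsymm v.2 u.1]
    ring
  -- moments
  set th := ∫ u, ∫ v, Hstar k u v ∂m ∂m with hth
  set dM := ∫ u, Hstar k u u ∂m with hdM
  set aM := ∫ u, ∫ v, ∫ w, Hstar k u v * Hstar k u w ∂m ∂m ∂m with haM
  set sM := ∫ u, ∫ v, Hstar k u v * Hstar k u v ∂m ∂m with hsM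
  set cM := ∫ u, ∫ v, Hstar k u u * Hstar k u v ∂m ∂m with hcM
  set d2M := ∫ u, Hstar k u u * Hstar k u u ∂m with hd2M
  have hpop : sigmaSqPop m k = 4 * (aM - th * th) := by
    simp only [sigmaSqPop, ← haM, ← hth]
    ring
  have habs1 : ∀ (f : (𝒳×𝒳) → ℝ) (C : ℝ), (∀ x, |f x| ≤ C) → |∫ x, f x ∂m| ≤ C := by
    intro f C h
    have h2 := norm_integral_le_of_norm_le_const (μ := m) (f := f) (C := C)
      (ae_of_all _ (by simpa [Real.norm_eq_abs] using h))
    simpa [Real.norm_eq_abs, measure_univ] using h2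
  have hbHH : ∀ u v w z : 𝒳×𝒳, |Hstar k u v * Hstar k w z| ≤ (3*ν)*(3*ν) := by
    intro u v w z
    rw [abs_mul]
    exact mul_le_mul (hHb u v) (hHb w z) (abs_nonneg _) hC0
  have hbth : |th| ≤ 3*ν := by
    rw [hth]; exact habs1 _ _ (fun u => habs1 _ _ (fun v => hHb u v))
  have hbdM : |dM| ≤ 3*ν := by
    rw [hdM]; exact habs1 _ _ (fun u => hHb u u)
  have hbaM : |aM| ≤ (3*ν)*(3*ν) := by
    rw [haM]
    exact habs1 _ _ fun u => habs1 _ _ fun v => habs1 _ _ fun w => hbHH u v u w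
  have hbsM : |sM| ≤ (3*ν)*(3*ν) := by
    rw [hsM]; exact habs1 _ _ fun u => habs1 _ _ fun v => hbHH u v u v
  have hbcM : |cM| ≤ (3*ν)*(3*ν) := by
    rw [hcM]; exact habs1 _ _ fun u => habs1 _ _ fun v => hbHH u u u v
  have hbd2M : |d2M| ≤ (3*ν)*(3*ν) := by
    rw [hd2M]; exact habs1 _ _ fun u => hbHH u u u u
  have hbthth : |th*th| ≤ (3*ν)*(3*ν) := by
    rw [abs_mul]; exact mul_le_mul hbth hbth (abs_nonneg _) hC0
  have hbdth : |dM*th| ≤ (3*ν)*(3*ν) := by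
    rw [abs_mul]; exact mul_le_mul hbdM hbth (abs_nonneg _) hC0
  have hbdd : |dM*dM| ≤ (3*ν)*(3*ν) := by
    rw [abs_mul]; exact mul_le_mul hbdM hbdM (abs_nonneg _) hC0
  -- symmetry helpers
  have hsw1 : ∀ i j l r : Fin n, (∫ ω, Hstar k (U i ω) (U j ω) * Hstar k (U l ω) (U r ω) ∂μ) = (∫ ω, Hstar k (U j ω) (U i ω) * Hstar k (U l ω) (U r ω) ∂μ) := by
    intro i j l r
    refine integral_congr_ae (ae_of_all _ fun ω => ?_)
    show Hstar k (U i ω) (U j ω) * Hstar k (U l ω) (U r ω) = Hstar k (U j ω) (U i ω) * Hstar k (U l ω) (U r ω)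
    rw [hHsym (U i ω) (U j ω)]
  have hsw2 : ∀ i j l r : Fin n, (∫ ω, Hstar k (U i ω) (U j ω) * Hstar k (U l ω) (U r ω) ∂μ) = (∫ ω, Hstar k (U i ω) (U j ω) * Hstar k (U r ω) (U l ω) ∂μ) := by
    intro i j l r
    refine integral_congr_ae (ae_of_all _ fun ω => ?_)
    show Hstar k (U i ω) (U j ω) * Hstar k (U l ω) (U r ω) = Hstar k (U i ω) (U j ω) * Hstar k (U r ω) (U l ω)
    rw [hHsym (U l ω) (U r ω)]
  have hcm : ∀ i j l r : Fin n, (∫ ω, Hstar k (U i ω) (U j ω) * Hstar k (U l ω) (U r ω) ∂μ) = (∫ ω, Hstar k (U l ω) (U r ω) * Hstar k (U i ω) (U j ω) ∂μ) := by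
    intro i j l r
    refine integral_congr_ae (ae_of_all _ fun ω => ?_)
    show Hstar k (U i ω) (U j ω) * Hstar k (U l ω) (U r ω) = Hstar k (U l ω) (U r ω) * Hstar k (U i ω) (U j ω)
    exact mul_comm _ _
  -- base patterns
  have bd2 : ∀ i : Fin n, (∫ ω, Hstar k (U i ω) (U i ω) * Hstar k (U i ω) (U i ω) ∂μ) = d2M := by
    intro i
    rw [hd2M]
    exact my_E2_d2 μ m U hU hindep hlaw (Hstar k) hHmeas hC0 hHb hn i
  have bc : ∀ i r : Fin n, i ≠ r → (∫ ω, Hstar k (U i ω) (U i ω) * Hstar k (U i ω) (U r ω) ∂μ) = cM := by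
    intro i r h
    rw [hcM]
    exact my_E2_c μ m U hU hindep hlaw (Hstar k) hHmeas hC0 hHb hn i r h
  have bs : ∀ i j : Fin n, i ≠ j → (∫ ω, Hstar k (U i ω) (U j ω) * Hstar k (U i ω) (U j ω) ∂μ) = sM := by
    intro i j h
    rw [hsM]
    exact my_E2_s μ m U hU hindep hlaw (Hstar k) hHmeas hC0 hHb hn i j h
  have ba : ∀ i j l : Fin n, i ≠ j → i ≠ l → j ≠ l → (∫ ω, Hstar k (U i ω) (U j ω) * Hstar k (U i ω) (U l ω) ∂μ) = aM := by
    intro i j l h1 h2 h3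
    rw [haM]
    exact my_E2_a μ m U hU hindep hlaw (Hstar k) hHmeas hC0 hHb hn i j l h1 h2 h3
  have bdd : ∀ i l : Fin n, i ≠ l → (∫ ω, Hstar k (U i ω) (U i ω) * Hstar k (U l ω) (U l ω) ∂μ) = dM*dM := by
    intro i l h
    rw [hdM]
    exact my_E2_dd μ m U hU hindep hlaw (Hstar k) hHmeas hC0 hHb hn i l h
  have bdth : ∀ i l r : Fin n, i ≠ l → i ≠ r → l ≠ r → (∫ ω, Hstar k (U i ω) (U i ω) * Hstar k (U l ω) (U r ω) ∂μ) = dM*th := by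
    intro i l r h1 h2 h3
    rw [hdM, hth]
    exact my_E2_dtheta μ m U hU hindep hlaw (Hstar k) hHmeas hC0 hHb hn i l r h1 h2 h3
  have ball : ∀ i j l r : Fin n, i ≠ j → i ≠ l → i ≠ r → j ≠ l → j ≠ r → l ≠ r →
      (∫ ω, Hstar k (U i ω) (U j ω) * Hstar k (U l ω) (U r ω) ∂μ) = th*th := by
    intro i j l r h1 h2 h3 h4 h5 h6
    rw [hth]
    exact my_E2_all μ m U hU hindep hlaw (Hstar k) hHmeas hC0 hHb i j l r h1 h2 h3 h4 h5 h6
  -- counting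
  have hAv : ∀ i : Fin n, ∑ j, ∑ l, (∫ ω, Hstar k (U i ω) (U j ω) * Hstar k (U i ω) (U l ω) ∂μ)
      = d2M + 2*((n:ℝ)-1)*cM + ((n:ℝ)-1)*sM + ((n:ℝ)-1)*((n:ℝ)-2)*aM := by
    intro i
    exact my_countA hn (fun j l => (∫ ω, Hstar k (U i ω) (U j ω) * Hstar k (U i ω) (U l ω) ∂μ)) i d2M cM sM aM
      (bd2 i)
      (fun l hl => bc i l (Ne.symm hl))
      (fun j hj => (hcm i j i i).trans (bc i j (Ne.symm hj)))
      (fun j hj => bs i j (Ne.symm hj))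
      (fun j l hj hl hjl => ba i j l (Ne.symm hj) (Ne.symm hl) hjl)
  have hBv : ∑ i, ∑ j, ∑ l, ∑ r, (∫ ω, Hstar k (U i ω) (U j ω) * Hstar k (U l ω) (U r ω) ∂μ)
      = (n:ℝ) * (d2M + ((n:ℝ)-1)*(dM*dM) + 4*((n:ℝ)-1)*cM + 2*((n:ℝ)-1)*sM
        + 2*((n:ℝ)-1)*((n:ℝ)-2)*(dM*th) + 4*((n:ℝ)-1)*((n:ℝ)-2)*aM
        + ((n:ℝ)-1)*((n:ℝ)-2)*((n:ℝ)-3)*(th*th)) := by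
    exact my_countB hn (fun i j l r => (∫ ω, Hstar k (U i ω) (U j ω) * Hstar k (U l ω) (U r ω) ∂μ)) d2M cM sM aM (dM*dM) (dM*th) (th*th)
      (fun i => bd2 i)
      (fun i r h => bc i r (Ne.symm h))
      (fun i l h => (hsw2 i i l i).trans (bc i l (Ne.symm h)))
      (fun i l h => bdd i l (Ne.symm h))
      (fun i l r hl hr hrl => bdth i l r (Ne.symm hl) (Ne.symm hr) (Ne.symm hrl))
      (fun i j h => (hcm i j i i).trans (bc i j (Ne.symm h)))
      (fun i j h => bs i j (Ne.symm h))
      (fun i j r hj hr hrj => ba i j r (Ne.symm hj) (Ne.symm hr) (Ne.symm hrj))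
      (fun i j h => (hsw2 i j j i).trans (bs i j (Ne.symm h)))
      (fun i j h => (hcm i j j j).trans ((hsw2 j j i j).trans (bc j i h)))
      (fun i j r hj hr hrj => (hsw1 i j j r).trans
        (ba j i r hj (Ne.symm hrj) (Ne.symm hr)))
      (fun i j l hj hl hlj => (hsw2 i j l i).trans
        (ba i j l (Ne.symm hj) (Ne.symm hl) (Ne.symm hlj)))
      (fun i j l hj hl hlj => (hsw1 i j l j).trans ((hsw2 j i l j).trans
        (ba j i l hj (Ne.symm hlj) (Ne.symm hl))))
      (fun i j l hj hl hlj => (hcm i j l l).trans (bdth l i j hl hlj (Ne.symm hj)))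
      (fun i j l r hj hl hlj hr hrj hrl => ball i j l r (Ne.symm hj) (Ne.symm hl)
        (Ne.symm hr) (Ne.symm hlj) (Ne.symm hrj) (Ne.symm hrl))
  -- integrability and expectation expansion
  have hIntHH : ∀ i j l r : Fin n,
      Integrable (fun ω => Hstar k (U i ω) (U j ω) * Hstar k (U l ω) (U r ω)) μ := by
    intro i j l r
    exact my_integrable_of_bound μ _
      ((hHmeas.comp ((hU i).prodMk (hU j))).mul (hHmeas.comp ((hU l).prodMk (hU r))))
      ((3*ν)*(3*ν)) (fun ω => hbHH _ _ _ _)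
  have hpt : ∀ ω, sigmaHat k n (fun i => U i ω)
      = (4/(n:ℝ)^3) * ∑ i, ∑ j, ∑ l, Hstar k (U i ω) (U j ω) * Hstar k (U i ω) (U l ω)
        - (4/(n:ℝ)^4) * ∑ i, ∑ j, ∑ l, ∑ r, Hstar k (U i ω) (U j ω) * Hstar k (U l ω) (U r ω) := by
    intro ω
    simp only [sigmaHat]
    have h1 : ∀ i : Fin n, (∑ j, Hstar k (U i ω) (U j ω))^2
        = ∑ j, ∑ l, Hstar k (U i ω) (U j ω) * Hstar k (U i ω) (U l ω) := by
      intro i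
      rw [sq, Finset.sum_mul_sum]
    have h2 : (∑ i, ∑ j, Hstar k (U i ω) (U j ω))^2
        = ∑ i, ∑ j, ∑ l, ∑ r, Hstar k (U i ω) (U j ω) * Hstar k (U l ω) (U r ω) := by
      rw [sq, Finset.sum_mul_sum]
      refine Finset.sum_congr rfl fun i _ => ?_
      calc ∑ l, (∑ j, Hstar k (U i ω) (U j ω)) * (∑ r, Hstar k (U l ω) (U r ω))
          = ∑ l, ∑ j, ∑ r, Hstar k (U i ω) (U j ω) * Hstar k (U l ω) (U r ω) :=
            Finset.sum_congr rfl fun l _ => Finset.sum_mul_sum _ _ _ _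
        _ = ∑ j, ∑ l, ∑ r, Hstar k (U i ω) (U j ω) * Hstar k (U l ω) (U r ω) := Finset.sum_comm
    simp only [h1, h2]
  have hi1 : Integrable (fun ω => (4/(n:ℝ)^3) * ∑ i, ∑ j, ∑ l, Hstar k (U i ω) (U j ω) * Hstar k (U i ω) (U l ω)) μ :=
    ((integrable_finset_sum _ fun i _ => integrable_finset_sum _ fun j _ =>
      integrable_finset_sum _ fun l _ => hIntHH i j i l).const_mul _)
  have hi2 : Integrable (fun ω => (4/(n:ℝ)^4) * ∑ i, ∑ j, ∑ l, ∑ r, Hstar k (U i ω) (U j ω) * Hstar k (U l ω) (U r ω)) μ :=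
    ((integrable_finset_sum _ fun i _ => integrable_finset_sum _ fun j _ =>
      integrable_finset_sum _ fun l _ => integrable_finset_sum _ fun r _ =>
        hIntHH i j l r).const_mul _)
  have hs3 : ∫ ω, ∑ i, ∑ j, ∑ l, Hstar k (U i ω) (U j ω) * Hstar k (U i ω) (U l ω) ∂μ = ∑ i, ∑ j, ∑ l, (∫ ω, Hstar k (U i ω) (U j ω) * Hstar k (U i ω) (U l ω) ∂μ) := by
    rw [integral_finset_sum _ (fun i _ => integrable_finset_sum _ fun j _ =>
      integrable_finset_sum _ fun l _ => hIntHH i j i l)]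
    refine Finset.sum_congr rfl fun i _ => ?_
    rw [integral_finset_sum _ (fun j _ => integrable_finset_sum _ fun l _ => hIntHH i j i l)]
    exact Finset.sum_congr rfl fun j _ => integral_finset_sum _ (fun l _ => hIntHH i j i l)
  have hs4 : ∫ ω, ∑ i, ∑ j, ∑ l, ∑ r, Hstar k (U i ω) (U j ω) * Hstar k (U l ω) (U r ω) ∂μ = ∑ i, ∑ j, ∑ l, ∑ r, (∫ ω, Hstar k (U i ω) (U j ω) * Hstar k (U l ω) (U r ω) ∂μ) := by
    rw [integral_finset_sum _ (fun i _ => integrable_finset_sum _ fun j _ =>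
      integrable_finset_sum _ fun l _ => integrable_finset_sum _ fun r _ => hIntHH i j l r)]
    refine Finset.sum_congr rfl fun i _ => ?_
    rw [integral_finset_sum _ (fun j _ => integrable_finset_sum _ fun l _ =>
      integrable_finset_sum _ fun r _ => hIntHH i j l r)]
    refine Finset.sum_congr rfl fun j _ => ?_
    rw [integral_finset_sum _ (fun l _ => integrable_finset_sum _ fun r _ => hIntHH i j l r)]
    exact Finset.sum_congr rfl fun l _ => integral_finset_sum _ (fun r _ => hIntHH i j l r)
  have hexp : ∫ ω, sigmaHat k n (fun i => U i ω) ∂μ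
      = (4/(n:ℝ)^3) * ∑ i, ∑ j, ∑ l, (∫ ω, Hstar k (U i ω) (U j ω) * Hstar k (U i ω) (U l ω) ∂μ)
        - (4/(n:ℝ)^4) * ∑ i, ∑ j, ∑ l, ∑ r, (∫ ω, Hstar k (U i ω) (U j ω) * Hstar k (U l ω) (U r ω) ∂μ) := by
    rw [integral_congr_ae (ae_of_all _ hpt), integral_sub hi1 hi2,
      integral_const_mul, integral_const_mul, hs3, hs4]
  have hval : ∫ ω, sigmaHat k n (fun i => U i ω) ∂μ
      = (4/(n:ℝ)^3) * ((n:ℝ) * (d2M + 2*((n:ℝ)-1)*cM + ((n:ℝ)-1)*sM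
          + ((n:ℝ)-1)*((n:ℝ)-2)*aM))
        - (4/(n:ℝ)^4) * ((n:ℝ) * (d2M + ((n:ℝ)-1)*(dM*dM) + 4*((n:ℝ)-1)*cM
          + 2*((n:ℝ)-1)*sM + 2*((n:ℝ)-1)*((n:ℝ)-2)*(dM*th)
          + 4*((n:ℝ)-1)*((n:ℝ)-2)*aM + ((n:ℝ)-1)*((n:ℝ)-2)*((n:ℝ)-3)*(th*th))) := by
    rw [hexp, Finset.sum_congr rfl (fun i _ => hAv i), Finset.sum_const, nsmul_eq_mul,
      Finset.card_univ, Fintype.card_fin, hBv]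
  have hdelta : (∫ ω, sigmaHat k n (fun i => U i ω) ∂μ) - sigmaSqPop m k
      = (4*(((n:ℝ)-1)*((n:ℝ)-2)*((n:ℝ)-4) - (n:ℝ)^3)/(n:ℝ)^3) * aM
        + (4*(6*(n:ℝ)^2-11*(n:ℝ)+6)/(n:ℝ)^3) * (th*th)
        + (4*((n:ℝ)-1)*((n:ℝ)-2)/(n:ℝ)^3) * sM
        + (8*((n:ℝ)-1)*((n:ℝ)-2)/(n:ℝ)^3) * cM
        + ((4*(n:ℝ)-4)/(n:ℝ)^3) * d2M
        + (-(8*((n:ℝ)-1)*((n:ℝ)-2))/(n:ℝ)^3) * (dM*th)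
        + (-(4*((n:ℝ)-1))/(n:ℝ)^3) * (dM*dM) := by
    rw [hval, hpop]
    field_simp
    ring
  -- putting the bound together
  have hK0 : (0:ℝ) ≤ (3*ν)*(3*ν) := mul_nonneg hC0 hC0
  have key : ∀ (co x p : ℝ), |co| ≤ p → |x| ≤ (3*ν)*(3*ν) →
      |co * x| ≤ p * ((3*ν)*(3*ν)) := by
    intro co x p h1 h2
    rw [abs_mul]
    exact mul_le_mul h1 h2 (abs_nonneg _) (le_trans (abs_nonneg _) h1)
  have habsdiv : ∀ A P : ℝ, |A| ≤ P → |A/(n:ℝ)^3| ≤ P/(n:ℝ)^3 := by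
    intro A P h1
    rw [abs_div, abs_of_pos (by positivity : (0:ℝ) < (n:ℝ)^3)]
    exact (div_le_div_iff_of_pos_right (by positivity)).2 h1
  have T1 : |(4*(((n:ℝ)-1)*((n:ℝ)-2)*((n:ℝ)-4) - (n:ℝ)^3)/(n:ℝ)^3) * aM|
      ≤ (28*(n:ℝ)^2-56*(n:ℝ)+32)/(n:ℝ)^3 * ((3*ν)*(3*ν)) :=
    key _ _ _ (habsdiv _ _ (my_cb1 hN4)) hbaM
  have T2 : |(4*(6*(n:ℝ)^2-11*(n:ℝ)+6)/(n:ℝ)^3) * (th*th)|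
      ≤ (24*(n:ℝ)^2-44*(n:ℝ)+24)/(n:ℝ)^3 * ((3*ν)*(3*ν)) :=
    key _ _ _ (habsdiv _ _ (my_cb2 hN4)) hbthth
  have T3 : |(4*((n:ℝ)-1)*((n:ℝ)-2)/(n:ℝ)^3) * sM|
      ≤ (4*(n:ℝ)^2-12*(n:ℝ)+8)/(n:ℝ)^3 * ((3*ν)*(3*ν)) :=
    key _ _ _ (habsdiv _ _ (my_cb3 hN4)) hbsM
  have T4 : |(8*((n:ℝ)-1)*((n:ℝ)-2)/(n:ℝ)^3) * cM|
      ≤ (8*(n:ℝ)^2-24*(n:ℝ)+16)/(n:ℝ)^3 * ((3*ν)*(3*ν)) :=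
    key _ _ _ (habsdiv _ _ (my_cb4 hN4)) hbcM
  have T5 : |((4*(n:ℝ)-4)/(n:ℝ)^3) * d2M|
      ≤ (4*(n:ℝ)-4)/(n:ℝ)^3 * ((3*ν)*(3*ν)) :=
    key _ _ _ (habsdiv _ _ (my_cb5 hN4)) hbd2M
  have T6 : |(-(8*((n:ℝ)-1)*((n:ℝ)-2))/(n:ℝ)^3) * (dM*th)|
      ≤ (8*(n:ℝ)^2-24*(n:ℝ)+16)/(n:ℝ)^3 * ((3*ν)*(3*ν)) :=
    key _ _ _ (habsdiv _ _ (my_cb6 hN4)) hbdth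
  have T7 : |(-(4*((n:ℝ)-1))/(n:ℝ)^3) * (dM*dM)|
      ≤ (4*(n:ℝ)-4)/(n:ℝ)^3 * ((3*ν)*(3*ν)) :=
    key _ _ _ (habsdiv _ _ (my_cb7 hN4)) hbdd
  have htri : |(∫ ω, sigmaHat k n (fun i => U i ω) ∂μ) - sigmaSqPop m k|
      ≤ ((72*(n:ℝ)^2-152*(n:ℝ)+88)/(n:ℝ)^3) * ((3*ν)*(3*ν)) := by
    rw [hdelta]
    have step := le_trans (abs_add_le _ _) (add_le_add (le_trans (abs_add_le _ _)
      (add_le_add (le_trans (abs_add_le _ _) (add_le_add (le_trans (abs_add_le _ _)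
      (add_le_add (le_trans (abs_add_le _ _) (add_le_add (le_trans (abs_add_le _ _)
      (add_le_add T1 T2)) T3)) T4)) T5)) T6)) T7)
    refine le_trans step (le_of_eq ?_)
    field_simp
    ring
  have hfin1 : ((72*(n:ℝ)^2-152*(n:ℝ)+88)/(n:ℝ)^3) * ((3*ν)*(3*ν))
      ≤ 72 * ν ^ 2 * (9 / (n : ℝ) - 13 / (n : ℝ) ^ 2 + 6 / (n : ℝ) ^ 3) := by
    rw [div_mul_eq_mul_div,
      show 72 * ν ^ 2 * (9 / (n : ℝ) - 13 / (n : ℝ) ^ 2 + 6 / (n : ℝ) ^ 3)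
        = (72*ν^2*(9*(n:ℝ)^2-13*(n:ℝ)+6))/(n:ℝ)^3 from by field_simp]
    exact (div_le_div_iff_of_pos_right (by positivity)).2 (my_fin1 hN4)
  have hfin2 : 72 * ν ^ 2 * (9 / (n : ℝ) - 13 / (n : ℝ) ^ 2 + 6 / (n : ℝ) ^ 3)
      ≤ 648 * ν ^ 2 / n := by
    rw [show 72 * ν ^ 2 * (9 / (n : ℝ) - 13 / (n : ℝ) ^ 2 + 6 / (n : ℝ) ^ 3)
        = (72*ν^2*(9*(n:ℝ)^2-13*(n:ℝ)+6))/(n:ℝ)^3 from by field_simp,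
      show 648 * ν ^ 2 / (n:ℝ) = (648*ν^2*(n:ℝ)^2)/(n:ℝ)^3 from by field_simp]
    refine (div_le_div_iff_of_pos_right (by positivity)).2 ?_
    have h9 := my_fin2 (ν := ν) hN4
    linarith
  exact ⟨le_trans htri hfin1, hfin2⟩
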